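/- The function φ(p) = (K/(α' · ⌈Kp/α⌉))·1{p ≤ α} (with φ(0) = K/α'), where α' = α·ℓ_K and ℓ_K = Σ_{k=1}^K 1/k, satisfies ∫₀¹ φ(p) dp = 1; consequently, if P is a p-variable then E[φ(P)] ≤ 1, i.e., φ(P) is an e-variable. -/

import Mathlib

open MeasureTheory ProbabilityTheory Finset
open scoped ENNReal Classical

noncomputable section

/-- The `i`-th smallest value (0-indexed) among `p 0, …, p (K-1)`. -/
def sortAsc {K : ℕ} (p : Fin K → ℝ) : Fin K → ℝ := p ∘ Tuple.sort p

/-- The `i`-th largest value (0-indexed) among `e 0, …, e (K-1)`. -/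
def sortDesc {K : ℕ} (e : Fin K → ℝ) : Fin K → ℝ := e ∘ Tuple.sort (fun j => -e j)

/-- `k* = max {k : K p_(k) / k ≤ α}` (with `max ∅ = 0`), the BH rejection count. -/
def bhCount (K : ℕ) (α : ℝ) (p : Fin K → ℝ) : ℕ :=
  (univ.filter (fun i : Fin K => (K : ℝ) * sortAsc p i / (i.1 + 1) ≤ α)).sup
    (fun i => i.1 + 1)

/-- The BH procedure rejects the hypotheses carrying the `k*` smallest p-values. -/
def bhRejects (K : ℕ) (α : ℝ) (p : Fin K → ℝ) : Finset (Fin K) :=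
  univ.filter (fun k => ∃ i : Fin K, i.1 + 1 ≤ bhCount K α p ∧ p k ≤ sortAsc p i)

/-- `k* = max {k : k e_[k] / K ≥ 1/α}`, the e-BH rejection count. -/
def ebhCount (K : ℕ) (α : ℝ) (e : Fin K → ℝ) : ℕ :=
  (univ.filter (fun i : Fin K => 1 / α ≤ (i.1 + 1) * sortDesc e i / K)).sup
    (fun i => i.1 + 1)

/-- The e-BH procedure rejects the hypotheses carrying the `k*` largest e-values. -/
def ebhRejects (K : ℕ) (α : ℝ) (e : Fin K → ℝ) : Finset (Fin K) :=
  univ.filter (fun k => ∃ i : Fin K, i.1 + 1 ≤ ebhCount K α e ∧ sortDesc e i ≤ e k)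

/-- Simes function `S_K(p) = min_k (K/k) p_(k)`. -/
def simes (K : ℕ) (p : Fin K → ℝ) : ℝ := ⨅ i : Fin K, (K : ℝ) / (i.1 + 1) * sortAsc p i

/-- Harmonic number `ℓ_K = ∑_{k=1}^K 1/k`. -/
def harm (K : ℕ) : ℝ := ∑ k ∈ Finset.Icc 1 K, (1 : ℝ) / k

/-- An increasing (upper) subset of `ℝ^K`. -/
def IncreasingSet {K : ℕ} (A : Set (Fin K → ℝ)) : Prop := ∀ x ∈ A, ∀ y, x ≤ y → y ∈ A

/-- Positive regression dependence on the subset `N` of nulls. -/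
def PRDS {Ω : Type*} [MeasurableSpace Ω] (μ : Measure Ω) {K : ℕ}
    (P : Fin K → Ω → ℝ) (N : Finset (Fin K)) : Prop :=
  ∀ k ∈ N, ∀ A : Set (Fin K → ℝ), MeasurableSet A → IncreasingSet A →
    Monotone (fun x : ℝ => μ[|{ω | P k ω ≤ x}] {ω | (fun j => P j ω) ∈ A})

/-- False discovery proportion of a rejection set `D` w.r.t. the null set `N`. -/
def fdp {K : ℕ} (D N : Finset (Fin K)) : ℝ := ((D ∩ N).card : ℝ) / (max D.card 1 : ℕ)

end

/-- The p-to-e calibrator `φ(p) = (K/(α' ⌈Kp/α⌉)) 1_{p ≤ α}`, `φ(0) = K/α'`,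
where `α' = α ℓ_K`. -/
noncomputable def phi (K : ℕ) (α : ℝ) (p : ℝ) : ℝ :=
  if p = 0 then (K : ℝ) / (α * harm K)
  else if p ≤ α then (K : ℝ) / (α * harm K * (⌈(K : ℝ) * p / α⌉ : ℤ)) else 0

noncomputable def cf (K : ℕ) (α : ℝ) (j : ℕ) : ℝ :=
  if j ≤ K then (K : ℝ) / (α * harm K * j) else 0

noncomputable def df (K : ℕ) (α : ℝ) (j : ℕ) : ℝ := cf K α j - cf K α (j + 1)

lemma harm_pos {K : ℕ} (hK : 0 < K) : 0 < harm K := by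
  apply Finset.sum_pos
  · intro k hk
    simp only [Finset.mem_Icc] at hk
    have : (0:ℝ) < k := by exact_mod_cast Nat.lt_of_lt_of_le Nat.zero_lt_one hk.1
    positivity
  · exact ⟨1, Finset.mem_Icc.mpr ⟨le_refl 1, hK⟩⟩

lemma sum_Icc_eq_range (f : ℕ → ℝ) (m n : ℕ) :
    ∑ i ∈ Finset.Icc m n, f i = ∑ i ∈ Finset.range (n + 1 - m), f (m + i) := by
  rw [← Finset.Ico_add_one_right_eq_Icc, Finset.sum_Ico_eq_sum_range]

lemma sum_df {K : ℕ} (α : ℝ) {m : ℕ} (hm1 : 1 ≤ m) (hm : m ≤ K) :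
    ∑ j ∈ Finset.Icc m K, df K α j = cf K α m := by
  rw [sum_Icc_eq_range]
  have h : ∑ i ∈ Finset.range (K + 1 - m), df K α (m + i)
      = cf K α (m + 0) - cf K α (m + (K + 1 - m)) :=
    Finset.sum_range_sub' (fun i => cf K α (m + i)) (K + 1 - m)
  rw [h, show m + (K + 1 - m) = K + 1 by omega, add_zero]
  have : ¬ (K + 1 ≤ K) := by omega
  simp [cf, this]

lemma df_nonneg {K : ℕ} {α : ℝ} (hα : 0 < α) (hK : 0 < K) {j : ℕ} (hj : 1 ≤ j) :
    0 ≤ df K α j := by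
  have hℓ := harm_pos hK
  have hj0 : (0:ℝ) < j := by exact_mod_cast hj
  simp only [df, cf]
  by_cases h1 : j + 1 ≤ K
  · rw [if_pos (by omega : j ≤ K), if_pos h1, sub_nonneg]
    apply div_le_div_of_nonneg_left (Nat.cast_nonneg K) (by positivity)
    push_cast; nlinarith
  · rw [if_neg h1]
    by_cases h0 : j ≤ K
    · rw [if_pos h0, sub_zero]
      apply div_nonneg (Nat.cast_nonneg K) (by positivity)
    · rw [if_neg h0]; simp

lemma sum_dt {K : ℕ} {α : ℝ} (hK : 0 < K) (hα : 0 < α) :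
    ∑ j ∈ Finset.Icc 1 K, df K α j * (α * j / K) = 1 := by
  have hℓ := harm_pos hK
  have hK0 : (0:ℝ) < K := Nat.cast_pos.mpr hK
  -- rewrite each term as an inner sum of constants
  have h1 : ∀ j ∈ Finset.Icc 1 K,
      df K α j * (α * j / K) = ∑ i ∈ Finset.Icc 1 j, df K α j * (α / K) := by
    intro j hj
    rw [Finset.sum_const, Nat.card_Icc]
    simp only [Nat.add_sub_cancel, nsmul_eq_mul]
    ring
  rw [Finset.sum_congr rfl h1]
  rw [Finset.sum_comm' (t' := Finset.Icc 1 K) (s' := fun i => Finset.Icc i K)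
    (fun j i => by simp only [Finset.mem_Icc]; omega)]
  have h2 : ∀ i ∈ Finset.Icc 1 K,
      ∑ j ∈ Finset.Icc i K, df K α j * (α / K) = (K:ℝ) / (α * harm K * i) * (α / K) := by
    intro i hi
    simp only [Finset.mem_Icc] at hi
    rw [← Finset.sum_mul, sum_df α hi.1 hi.2, cf, if_pos hi.2]
  rw [Finset.sum_congr rfl h2]
  have h3 : ∀ i ∈ Finset.Icc 1 K,
      (K:ℝ) / (α * harm K * i) * (α / K) = (1 / harm K) * (1 / i) := by
    intro i hi
    simp only [Finset.mem_Icc] at hi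
    have hi0 : (0:ℝ) < i := by exact_mod_cast Nat.lt_of_lt_of_le Nat.zero_lt_one hi.1
    field_simp
  rw [Finset.sum_congr rfl h3, ← Finset.mul_sum]
  have : ∑ i ∈ Finset.Icc 1 K, (1:ℝ) / i = harm K := rfl
  rw [this]
  field_simp

lemma phi_eq {K : ℕ} {α : ℝ} (hK : 0 < K) (hα : 0 < α) {p : ℝ} (hp : 0 ≤ p) :
    phi K α p = ∑ j ∈ Finset.Icc 1 K, df K α j * (if p ≤ α * j / K then 1 else 0) := by
  have hℓ := harm_pos hK
  have hK0 : (0:ℝ) < K := Nat.cast_pos.mpr hK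
  rcases eq_or_lt_of_le hp with h0 | h0
  · -- p = 0
    have hcond : ∀ j ∈ Finset.Icc 1 K, df K α j * (if p ≤ α * j / K then (1:ℝ) else 0) = df K α j := by
      intro j hj
      simp only [Finset.mem_Icc] at hj
      have : p ≤ α * j / K := by
        rw [← h0]
        positivity
      rw [if_pos this, mul_one]
    rw [Finset.sum_congr rfl hcond, sum_df α le_rfl hK, cf, if_pos (show 1 ≤ K from hK)]
    simp [phi, ← h0]
  · -- p > 0
    by_cases hpa : p ≤ α
    · set m : ℤ := ⌈(K : ℝ) * p / α⌉ with hm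
      have hx0 : 0 < (K : ℝ) * p / α := by positivity
      have hm1 : 1 ≤ m := by
        have := Int.ceil_pos.mpr hx0
        omega
      have hmK : m ≤ K := by
        apply Int.ceil_le.mpr
        push_cast
        rw [div_le_iff₀ hα]
        nlinarith
      set n : ℕ := m.toNat with hn
      have hmn : (m : ℝ) = n := by
        rw [hn]
        exact_mod_cast (Int.toNat_of_nonneg (by omega)).symm
      have hn1 : 1 ≤ n := by omega
      have hnK : n ≤ K := by omega
      have hiff : ∀ j : ℕ, (p ≤ α * j / K) ↔ (n ≤ j) := by
        intro j
        rw [le_div_iff₀ hK0]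
        constructor
        · intro h
          have hxj : (K : ℝ) * p / α ≤ j := by
            rw [div_le_iff₀ hα]
            nlinarith
          have : m ≤ (j:ℤ) := Int.ceil_le.mpr (by exact_mod_cast hxj)
          omega
        · intro h
          have : (K : ℝ) * p / α ≤ n := by
            rw [hmn.symm]
            exact Int.le_ceil _
          have hjn : (n:ℝ) ≤ j := by exact_mod_cast h
          calc p * K = (K * p / α) * α := by field_simp
            _ ≤ (n:ℝ) * α := by nlinarith
            _ ≤ (j:ℝ) * α := by nlinarith
            _ = α * j := by ring
      have hsum : ∀ j ∈ Finset.Icc 1 K,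
          df K α j * (if p ≤ α * j / K then (1:ℝ) else 0)
            = if n ≤ j then df K α j else 0 := by
        intro j hj
        by_cases h : n ≤ j
        · rw [if_pos ((hiff j).mpr h), if_pos h, mul_one]
        · rw [if_neg (fun hc => h ((hiff j).mp hc)), if_neg h, mul_zero]
      rw [Finset.sum_congr rfl hsum, Finset.sum_ite, Finset.sum_const, smul_zero, add_zero]
      have hfil : Finset.filter (fun j => n ≤ j) (Finset.Icc 1 K) = Finset.Icc n K := by
        ext j
        simp only [Finset.mem_filter, Finset.mem_Icc]
        omega
      rw [hfil, sum_df α hn1 hnK, cf, if_pos hnK]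
      rw [phi, if_neg (ne_of_gt h0), if_pos hpa, ← hm, hmn]
    · have hcond : ∀ j ∈ Finset.Icc 1 K,
          df K α j * (if p ≤ α * j / K then (1:ℝ) else 0) = 0 := by
        intro j hj
        simp only [Finset.mem_Icc] at hj
        have hjK : (j:ℝ) ≤ K := Nat.cast_le.mpr hj.2
        have : α * j / K ≤ α := by
          rw [div_le_iff₀ hK0]
          nlinarith
        rw [if_neg (by push_neg at hpa ⊢; linarith), mul_zero]
      rw [Finset.sum_congr rfl hcond]
      simp [phi, ne_of_gt h0, hpa]

lemma ite_eq_indicator (t c : ℝ) :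
    (fun p : ℝ => c * (if p ≤ t then (1:ℝ) else 0)) = Set.indicator (Set.Iic t) (fun _ => c) := by
  funext p
  simp [Set.indicator_apply, Set.mem_Iic, mul_ite]

/-- `∫₀¹ φ = 1`; consequently if `P` is a p-variable then `φ(P)` is an e-variable:
it is nonnegative with `E[φ(P)] ≤ 1`. -/
theorem phi_integral_one_and_evariable
    {K : ℕ} (hK : 0 < K) {α : ℝ} (hα : α ∈ Set.Ioo (0 : ℝ) 1) :
    (∫ p in (0 : ℝ)..1, phi K α p = 1) ∧
    ∀ {Ω : Type*} [MeasurableSpace Ω] (μ : Measure Ω) [IsProbabilityMeasure μ]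
      (P : Ω → ℝ), Measurable P → (∀ ω, 0 ≤ P ω) →
      (∀ x ∈ Set.Ioo (0 : ℝ) 1, μ {ω | P ω ≤ x} ≤ ENNReal.ofReal x) →
      (∀ ω, 0 ≤ phi K α (P ω)) ∧ ∫ ω, phi K α (P ω) ∂μ ≤ 1 := by
  obtain ⟨hα0, hα1⟩ := hα
  have hK0 : (0:ℝ) < K := Nat.cast_pos.mpr hK
  have ht : ∀ j ∈ Finset.Icc 1 K, 0 < α * j / K ∧ α * j / K < 1 := by
    intro j hj
    simp only [Finset.mem_Icc] at hj
    have hj0 : (0:ℝ) < j := by exact_mod_cast Nat.lt_of_lt_of_le Nat.zero_lt_one hj.1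
    have hjK : (j:ℝ) ≤ K := Nat.cast_le.mpr hj.2
    constructor
    · positivity
    · rw [div_lt_iff₀ hK0]
      nlinarith
  constructor
  · -- the integral over [0,1] equals 1
    rw [intervalIntegral.integral_of_le zero_le_one]
    rw [MeasureTheory.setIntegral_congr_fun measurableSet_Ioc
      (fun p hp => phi_eq hK hα0 (le_of_lt hp.1))]
    have hfin : (volume.restrict (Set.Ioc (0:ℝ) 1)) Set.univ < ⊤ := by
      rw [Measure.restrict_apply MeasurableSet.univ, Set.univ_inter, Real.volume_Ioc]
      exact ENNReal.ofReal_lt_top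
    have hint : ∀ j ∈ Finset.Icc 1 K, MeasureTheory.Integrable
        (fun p : ℝ => df K α j * (if p ≤ α * j / K then (1:ℝ) else 0))
        (volume.restrict (Set.Ioc (0:ℝ) 1)) := by
      intro j hj
      rw [ite_eq_indicator]
      exact (MeasureTheory.integrable_const _).indicator measurableSet_Iic
    rw [MeasureTheory.integral_finset_sum _ hint]
    have hone : ∀ j ∈ Finset.Icc 1 K,
        (∫ p in Set.Ioc (0:ℝ) 1, df K α j * (if p ≤ α * j / K then (1:ℝ) else 0))
          = df K α j * (α * j / K) := by
      intro j hj
      obtain ⟨ht0, ht1⟩ := ht j hj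
      rw [ite_eq_indicator, MeasureTheory.integral_indicator_const _ measurableSet_Iic]
      rw [measureReal_def, Measure.restrict_apply measurableSet_Iic]
      have hset : Set.Iic (α * j / K) ∩ Set.Ioc 0 1 = Set.Ioc 0 (α * j / K) := by
        ext x
        simp only [Set.mem_inter_iff, Set.mem_Iic, Set.mem_Ioc]
        constructor
        · rintro ⟨h1, h2, _⟩; exact ⟨h2, h1⟩
        · rintro ⟨h1, h2⟩; exact ⟨h2, h1, h2.trans ht1.le⟩
      rw [hset, Real.volume_Ioc, sub_zero, ENNReal.toReal_ofReal ht0.le, smul_eq_mul, mul_comm]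
    rw [Finset.sum_congr rfl hone]
    exact sum_dt hK hα0
  · -- the e-variable property
    intro Ω _ μ _ P hPm hP0 hPle
    have hrw : (fun ω => phi K α (P ω))
        = fun ω => ∑ j ∈ Finset.Icc 1 K, df K α j * (if P ω ≤ α * j / K then (1:ℝ) else 0) :=
      funext fun ω => phi_eq hK hα0 (hP0 ω)
    constructor
    · intro ω
      rw [phi_eq hK hα0 (hP0 ω)]
      apply Finset.sum_nonneg
      intro j hj
      simp only [Finset.mem_Icc] at hj
      have := df_nonneg hα0 hK hj.1
      positivity
    · rw [hrw]
      have hind : ∀ j : ℕ, (fun ω => df K α j * (if P ω ≤ α * j / K then (1:ℝ) else 0))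
          = Set.indicator (P ⁻¹' Set.Iic (α * j / K)) (fun _ => df K α j) := by
        intro j
        funext ω
        simp [Set.indicator_apply, Set.mem_Iic, mul_ite]
      have hint : ∀ j ∈ Finset.Icc 1 K, MeasureTheory.Integrable
          (fun ω => df K α j * (if P ω ≤ α * j / K then (1:ℝ) else 0)) μ := by
        intro j hj
        rw [hind j]
        exact (MeasureTheory.integrable_const _).indicator (hPm measurableSet_Iic)
      rw [MeasureTheory.integral_finset_sum _ hint]
      have hbound : ∀ j ∈ Finset.Icc 1 K,
          (∫ ω, df K α j * (if P ω ≤ α * j / K then (1:ℝ) else 0) ∂μ)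
            ≤ df K α j * (α * j / K) := by
        intro j hj
        simp only [Finset.mem_Icc] at hj
        obtain ⟨ht0, ht1⟩ := ht j (Finset.mem_Icc.mpr hj)
        rw [hind j, MeasureTheory.integral_indicator_const _ (hPm measurableSet_Iic),
          smul_eq_mul, mul_comm]
        have hμ : (μ (P ⁻¹' Set.Iic (α * j / K))).toReal ≤ α * j / K := by
          apply ENNReal.toReal_le_of_le_ofReal ht0.le
          exact hPle _ ⟨ht0, ht1⟩
        exact mul_le_mul_of_nonneg_left hμ (df_nonneg hα0 hK hj.1)
      calc ∑ j ∈ Finset.Icc 1 K, ∫ ω, df K α j * (if P ω ≤ α * j / K then (1:ℝ) else 0) ∂μ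
          ≤ ∑ j ∈ Finset.Icc 1 K, df K α j * (α * j / K) := Finset.sum_le_sum hbound
        _ = 1 := sum_dt hK hα0
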